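/- arXiv:1411.2145 — 6 statements merged into one kernel-verified Lean document; each statement's English description precedes it below -/
import Mathlib

section
/- Let p be a prime with p ≡ 1 (mod 4) and let α be an integer that is not a quadratic residue modulo p. Then the quaternion algebra (α, p) over ℚ(i) is a division algebra. -/
open Quaternion

section Padic

variable {p : ℕ} [hfp : Fact p.Prime] {α : ℤ}

lemma aux_norm_lt_one_iff (x : ℤ_[p]) : ‖x‖ < 1 ↔ PadicInt.toZMod x = 0 := by
  rw [PadicInt.norm_lt_one_iff_dvd, ← Ideal.mem_span_singleton,
    ← PadicInt.maximalIdeal_eq_span_p, ← PadicInt.ker_toZMod, RingHom.mem_ker]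

lemma aux_unit_case (hα : ¬ IsSquare ((α : ZMod p))) (T : ℤ_[p]) :
    ‖T ^ 2 - (α : ℤ_[p])‖ = 1 := by
  rcases lt_or_eq_of_le (PadicInt.norm_le_one (T ^ 2 - (α : ℤ_[p]))) with h | h
  · exfalso
    rw [aux_norm_lt_one_iff] at h
    apply hα
    refine ⟨PadicInt.toZMod T, ?_⟩
    have h2 : (PadicInt.toZMod T) ^ 2 - ((α : ℤ) : ZMod p) = 0 := by
      simpa [map_sub, map_pow] using h
    linear_combination -h2
  · exact h

lemma aux_alpha_norm (hα : ¬ IsSquare ((α : ZMod p))) : ‖((α : ℤ) : ℚ_[p])‖ = 1 := by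
  have hα0 : ((α : ℤ) : ZMod p) ≠ 0 := by
    intro h; exact hα ⟨0, by rw [h]; ring⟩
  rcases lt_or_eq_of_le (Padic.norm_int_le_one (p := p) α) with h | h
  · exfalso
    rw [Padic.norm_intCast_lt_one_iff] at h
    exact hα0 ((ZMod.intCast_zmod_eq_zero_iff_dvd α p).mpr h)
  · exact h

lemma aux_sub_norm (hα : ¬ IsSquare ((α : ZMod p))) (a b : ℚ_[p])
    (hab : a ≠ 0 ∨ b ≠ 0) :
    ‖a ^ 2 - (α : ℚ_[p]) * b ^ 2‖ = max ‖a‖ ‖b‖ ^ 2 := by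
  have hαn : ‖((α : ℤ) : ℚ_[p])‖ = 1 := aux_alpha_norm hα
  rcases eq_or_ne ‖a‖ ‖b‖ with he | hne
  · -- equal norms; both nonzero
    have hb : b ≠ 0 := by
      intro hb0
      rcases hab with h | h
      · exact h (by rw [← norm_eq_zero, he, hb0, norm_zero])
      · exact h hb0
    have hbn : ‖b‖ ≠ 0 := norm_ne_zero_iff.mpr hb
    set t : ℚ_[p] := a / b with hat
    have htn : ‖t‖ ≤ 1 := by
      rw [hat, norm_div, he, div_self hbn]
    set T : ℤ_[p] := ⟨t, htn⟩ with hT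
    have hdecomp : a ^ 2 - (α : ℚ_[p]) * b ^ 2 = b ^ 2 * ((T : ℚ_[p]) ^ 2 - (α : ℚ_[p])) := by
      have : (T : ℚ_[p]) = a / b := rfl
      rw [this]; field_simp
    have hcast : ((T ^ 2 - (α : ℤ_[p]) : ℤ_[p]) : ℚ_[p]) = (T : ℚ_[p]) ^ 2 - (α : ℚ_[p]) := by
      push_cast; ring
    rw [hdecomp, norm_mul, ← hcast, PadicInt.padic_norm_e_of_padicInt,
      aux_unit_case hα T, mul_one, norm_pow, he, max_self]
  · -- distinct norms
    have hsq : ‖a ^ 2‖ ≠ ‖-((α : ℚ_[p]) * b ^ 2)‖ := by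
      rw [norm_neg, norm_mul, norm_pow, norm_pow, hαn, one_mul]
      intro h
      exact hne ((sq_eq_sq₀ (norm_nonneg a) (norm_nonneg b)).mp h)
    have := Padic.add_eq_max_of_ne hsq
    rw [← sub_eq_add_neg] at this
    rw [this, norm_neg, norm_mul, norm_pow, norm_pow, hαn, one_mul]
    rcases le_total ‖a‖ ‖b‖ with h | h
    · rw [max_eq_right h, max_eq_right (pow_le_pow_left₀ (norm_nonneg a) h 2)]
    · rw [max_eq_left h, max_eq_left (pow_le_pow_left₀ (norm_nonneg b) h 2)]

lemma aux_padic_key (hp : p.Prime) (hα : ¬ IsSquare ((α : ZMod p)))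
    (A B C D : ℚ_[p])
    (h : A ^ 2 - (α : ℚ_[p]) * B ^ 2 - (p : ℚ_[p]) * C ^ 2 + (α : ℚ_[p]) * (p : ℚ_[p]) * D ^ 2 = 0) :
    A = 0 ∧ B = 0 ∧ C = 0 ∧ D = 0 := by
  have hp0 : (p : ℚ_[p]) ≠ 0 := Nat.cast_ne_zero.mpr hp.ne_zero
  have hp1R : (1 : ℝ) < (p : ℝ) := by exact_mod_cast hp.one_lt
  have h' : A ^ 2 - (α : ℚ_[p]) * B ^ 2 = (p : ℚ_[p]) * (C ^ 2 - (α : ℚ_[p]) * D ^ 2) := by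
    linear_combination h
  have hAB : A = 0 ∧ B = 0 := by
    by_contra hAB
    rw [not_and_or] at hAB
    have hL : ‖A ^ 2 - (α : ℚ_[p]) * B ^ 2‖ = max ‖A‖ ‖B‖ ^ 2 := aux_sub_norm hα A B hAB
    have hmaxAB : 0 < max ‖A‖ ‖B‖ := by
      rcases hAB with h1 | h1
      · exact lt_max_of_lt_left (norm_pos_iff.mpr h1)
      · exact lt_max_of_lt_right (norm_pos_iff.mpr h1)
    have hCD : C ≠ 0 ∨ D ≠ 0 := by
      by_contra hCD
      rw [not_or, not_not, not_not] at hCD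
      have hz : ‖A ^ 2 - (α : ℚ_[p]) * B ^ 2‖ = 0 := by
        rw [h', hCD.1, hCD.2]; norm_num
      rw [hL] at hz
      nlinarith [hmaxAB]
    have hR : ‖C ^ 2 - (α : ℚ_[p]) * D ^ 2‖ = max ‖C‖ ‖D‖ ^ 2 := aux_sub_norm hα C D hCD
    have hmaxCD : 0 < max ‖C‖ ‖D‖ := by
      rcases hCD with h1 | h1
      · exact lt_max_of_lt_left (norm_pos_iff.mpr h1)
      · exact lt_max_of_lt_right (norm_pos_iff.mpr h1)
    -- choose witnesses achieving the max
    obtain ⟨x, hx0, hxm⟩ : ∃ x : ℚ_[p], x ≠ 0 ∧ ‖x‖ = max ‖A‖ ‖B‖ := by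
      rcases le_total ‖A‖ ‖B‖ with h1 | h1
      · exact ⟨B, norm_pos_iff.mp (by rw [max_eq_right h1] at hmaxAB; exact hmaxAB),
          (max_eq_right h1).symm⟩
      · exact ⟨A, norm_pos_iff.mp (by rw [max_eq_left h1] at hmaxAB; exact hmaxAB),
          (max_eq_left h1).symm⟩
    obtain ⟨y, hy0, hym⟩ : ∃ y : ℚ_[p], y ≠ 0 ∧ ‖y‖ = max ‖C‖ ‖D‖ := by
      rcases le_total ‖C‖ ‖D‖ with h1 | h1
      · exact ⟨D, norm_pos_iff.mp (by rw [max_eq_right h1] at hmaxCD; exact hmaxCD),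
          (max_eq_right h1).symm⟩
      · exact ⟨C, norm_pos_iff.mp (by rw [max_eq_left h1] at hmaxCD; exact hmaxCD),
          (max_eq_left h1).symm⟩
    have heq : ‖x‖ ^ 2 = ‖(p : ℚ_[p])‖ * ‖y‖ ^ 2 := by
      rw [hxm, hym, ← hL, ← hR, h', norm_mul]
    rw [Padic.norm_eq_zpow_neg_valuation hx0, Padic.norm_eq_zpow_neg_valuation hy0, Padic.norm_p] at heq
    have hpinv : ((p : ℝ))⁻¹ = (p : ℝ) ^ (-1 : ℤ) := by
      rw [zpow_neg, zpow_one]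
    rw [hpinv, ← zpow_natCast ((p:ℝ) ^ (-x.valuation)) 2, ← zpow_natCast ((p:ℝ) ^ (-y.valuation)) 2,
      ← zpow_mul, ← zpow_mul, ← zpow_add₀ (by positivity : (p:ℝ) ≠ 0)] at heq
    have := zpow_right_injective₀ (by positivity : (0:ℝ) < (p:ℝ)) (by linarith : (p:ℝ) ≠ 1) heq
    omega
  rw [hAB.1, hAB.2] at h'
  simp only [ne_eq, OfNat.ofNat_ne_zero, not_false_eq_true, zero_pow, mul_zero, sub_zero,
    zero_sub] at h'
  have hCD2 : C ^ 2 - (α : ℚ_[p]) * D ^ 2 = 0 := by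
    rcases mul_eq_zero.mp h'.symm with h1 | h1
    · exact absurd h1 hp0
    · exact h1
  have hD : D = 0 := by
    by_contra hD0
    set t : ℚ_[p] := C / D with hat
    have ht2 : t ^ 2 = (α : ℚ_[p]) := by
      rw [hat]; field_simp
      linear_combination hCD2
    have htn1 : ‖t‖ = 1 := by
      have : ‖t‖ ^ 2 = 1 := by
        rw [← norm_pow, ht2, aux_alpha_norm hα]
      have := (sq_eq_sq₀ (norm_nonneg t) (zero_le_one)).mp (by rw [this, one_pow])
      exact this
    set T : ℤ_[p] := ⟨t, le_of_eq htn1⟩ with hT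
    have hTz : T ^ 2 - (α : ℤ_[p]) = 0 := by
      have hc : ((T ^ 2 - (α : ℤ_[p]) : ℤ_[p]) : ℚ_[p]) = 0 := by
        push_cast
        rw [ht2]; ring
      exact (PadicInt.coe_eq_zero).mp hc
    have := aux_unit_case hα T
    rw [hTz, norm_zero] at this
    norm_num at this
  refine ⟨hAB.1, hAB.2, ?_, hD⟩
  rw [hD] at hCD2
  simp only [ne_eq, OfNat.ofNat_ne_zero, not_false_eq_true, zero_pow, mul_zero, sub_zero] at hCD2
  exact pow_eq_zero_iff (by norm_num) |>.mp hCD2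

lemma aux_sqrt_neg_one (hp : p.Prime) (hp4 : p % 4 = 1) :
    ∃ z : ℚ_[p], z ^ 2 = -1 := by
  have hp2 : p ≠ 2 := by omega
  obtain ⟨b, hb⟩ : IsSquare (-1 : ZMod p) :=
    ZMod.exists_sq_eq_neg_one_iff.mpr (by omega)
  haveI : Fact (1 < p) := ⟨hp.one_lt⟩
  have hb0 : b ≠ 0 := by
    intro h; rw [h, mul_zero] at hb
    exact (neg_ne_zero.mpr one_ne_zero) hb
  have h20 : (2 : ZMod p) ≠ 0 := by
    have : ((2 : ℕ) : ZMod p) ≠ 0 := by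
      rw [Ne, ZMod.natCast_eq_zero_iff]
      intro h
      exact hp2 ((Nat.prime_dvd_prime_iff_eq hp Nat.prime_two).mp h)
    simpa using this
  set a : ℤ_[p] := ((b.val : ℕ) : ℤ_[p]) with ha
  set F : Polynomial ℤ_[p] := Polynomial.X ^ 2 + 1 with hF
  have hta : PadicInt.toZMod a = b := by
    rw [ha, map_natCast, ZMod.natCast_val, ZMod.cast_id]
  have hFa : F.eval a = a ^ 2 + 1 := by simp [hF]
  have hFd : F.derivative.eval a = 2 * a := by
    simp [hF, Polynomial.derivative_X_pow, one_add_one_eq_two]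
  have hderiv_norm : ‖F.derivative.eval a‖ = 1 := by
    rw [hFd]
    rcases lt_or_eq_of_le (PadicInt.norm_le_one (2 * a)) with h | h
    · exfalso
      rw [aux_norm_lt_one_iff] at h
      rw [map_mul, hta, map_ofNat] at h
      exact (mul_ne_zero h20 hb0) h
    · exact h
  have hnorm : ‖F.eval a‖ < ‖F.derivative.eval a‖ ^ 2 := by
    rw [hderiv_norm, one_pow, hFa]
    rw [aux_norm_lt_one_iff]
    rw [map_add, map_pow, hta, map_one]
    rw [sq]
    rw [← hb]
    ring
  obtain ⟨z, hz, -⟩ := hensels_lemma hnorm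
  refine ⟨(z : ℚ_[p]), ?_⟩
  have hz' : z ^ 2 + 1 = 0 := by simpa [hF] using hz
  have hz'' : z ^ 2 = -1 := by linear_combination hz'
  have hc := congrArg (fun w : ℤ_[p] => (w : ℚ_[p])) hz''
  simpa only [PadicInt.coe_pow, PadicInt.coe_neg, PadicInt.coe_one] using hc

end Padic

/-- For a prime `p ≡ 1 (mod 4)` and an integer `α` that is not a
quadratic residue mod `p`, the quaternion algebra `(α, p)` over `ℚ(i)` is a
division algebra (every nonzero element is a unit). -/
theorem stmt0 (p : ℕ) (hp : p.Prime) (hp4 : p % 4 = 1) (α : ℤ)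
    (hα : ¬ IsSquare ((α : ZMod p))) :
    ∀ x : ℍ[CyclotomicField 4 ℚ, (α : CyclotomicField 4 ℚ), (p : CyclotomicField 4 ℚ)],
      x ≠ 0 → IsUnit x := by
  haveI : Fact p.Prime := ⟨hp⟩
  obtain ⟨z, hz2⟩ := aux_sqrt_neg_one hp hp4
  -- build the ring hom from ℚ(i) to ℚ_p
  have hcyc4 : Polynomial.cyclotomic 4 ℚ = Polynomial.X ^ 2 + 1 := by
    have h := Polynomial.cyclotomic_prime_pow_eq_geom_sum (R := ℚ) (p := 2) (n := 1) Nat.prime_two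
    norm_num [Finset.sum_range_succ] at h
    rw [h]; ring
  have hsplit : Polynomial.Splits ((Polynomial.cyclotomic 4 ℚ).map (algebraMap ℚ ℚ_[p])) := by
    have hmap : (Polynomial.cyclotomic 4 ℚ).map (algebraMap ℚ ℚ_[p])
        = (Polynomial.X - Polynomial.C z) * (Polynomial.X - Polynomial.C (-z)) := by
      rw [hcyc4]
      simp only [Polynomial.map_add, Polynomial.map_pow, Polynomial.map_one, Polynomial.map_X]
      have hneg : Polynomial.C (-z) = -Polynomial.C z := map_neg _ _
      have hsq : (Polynomial.C z) ^ 2 = -1 := by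
        rw [← map_pow, hz2, map_neg, map_one]
      rw [hneg, sub_neg_eq_add]
      linear_combination hsq
    rw [hmap]
    exact (Polynomial.Splits.mul (Polynomial.Splits.X_sub_C _) (Polynomial.Splits.X_sub_C _))
  let φ : CyclotomicField 4 ℚ →+* ℚ_[p] :=
    (Polynomial.SplittingField.lift (Polynomial.cyclotomic 4 ℚ) hsplit).toRingHom
  have hφ : Function.Injective φ := φ.injective
  intro x hx
  set K := CyclotomicField 4 ℚ
  set n : K := x.re ^ 2 - (α : K) * x.imI ^ 2 - (p : K) * x.imJ ^ 2
      + (α : K) * (p : K) * x.imK ^ 2 with hn_def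
  have hxsx : x * star x = (n : ℍ[K, (α : K), (p : K)]) := by
    rw [QuaternionAlgebra.mul_star_eq_coe]
    congr 1
    have hmre : ∀ a b : ℍ[K, (α : K), (p : K)], (a * b).re = a.re * b.re + (α : K) * a.imI * b.imI
        + (p : K) * a.imJ * b.imJ + 0 * (p : K) * a.imJ * b.imK - (α : K) * (p : K) * a.imK * b.imK :=
      fun _ _ => rfl
    simp only [hmre, QuaternionAlgebra.re_star, QuaternionAlgebra.imI_star,
      QuaternionAlgebra.imJ_star, QuaternionAlgebra.imK_star, hn_def]
    ring
  have hn : n ≠ 0 := by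
    intro h0
    apply hx
    have h4 : φ x.re ^ 2 - (α : ℚ_[p]) * φ x.imI ^ 2 - (p : ℚ_[p]) * φ x.imJ ^ 2
        + (α : ℚ_[p]) * (p : ℚ_[p]) * φ x.imK ^ 2 = 0 := by
      have := congrArg φ h0
      simpa [hn_def, map_add, map_sub, map_mul, map_pow, map_intCast, map_natCast] using this
    obtain ⟨hA, hB, hC, hD⟩ := aux_padic_key hp hα _ _ _ _ h4
    have eA : x.re = 0 := hφ (by rw [map_zero]; exact hA)
    have eB : x.imI = 0 := hφ (by rw [map_zero]; exact hB)
    have eC : x.imJ = 0 := hφ (by rw [map_zero]; exact hC)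
    have eD : x.imK = 0 := hφ (by rw [map_zero]; exact hD)
    ext <;> simp [eA, eB, eC, eD]
  have h1 : x * (n⁻¹ • star x) = 1 := by
    rw [mul_smul_comm, hxsx, QuaternionAlgebra.smul_coe, inv_mul_cancel₀ hn,
      QuaternionAlgebra.coe_one]
  have h2 : (n⁻¹ • star x) * x = 1 := by
    rw [smul_mul_assoc, star_comm_self', hxsx, QuaternionAlgebra.smul_coe,
      inv_mul_cancel₀ hn, QuaternionAlgebra.coe_one]
  exact ⟨⟨x, n⁻¹ • star x, h1, h2⟩, rfl⟩
end

section
/- The quaternion algebra (10, 29) over ℚ(i) is a division algebra. -/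
open Quaternion

namespace Stmt10Aux

/-- `10` is not a square (up to squares) mod 29. -/
lemma zmod_aux : ∀ u v : ZMod 29, u ^ 2 = 10 * v ^ 2 → u = 0 ∧ v = 0 := by decide

/-- Reduction mod the prime `5 + 2i` of norm 29, realized as `ℤ[i] → ZMod 29`, `i ↦ 12`. -/
def ψ : ℤ√(-1) →+* ZMod 29 := Zsqrtd.lift ⟨12, by decide⟩

lemma ψ_apply (z : ℤ√(-1)) : ψ z = (z.re : ZMod 29) + (z.im : ZMod 29) * 12 := rfl

lemma dvd_of_ψ_eq_zero (z : ℤ√(-1)) (h : ψ z = 0) : ∃ w, z = ⟨5, 2⟩ * w := by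
  rw [ψ_apply] at h
  have h' : ((z.re + 12 * z.im : ℤ) : ZMod 29) = 0 := by push_cast; linear_combination h
  obtain ⟨c, hc⟩ := (ZMod.intCast_zmod_eq_zero_iff_dvd _ _).mp h'
  refine ⟨⟨5 * c - 2 * z.im, z.im - 2 * c⟩, ?_⟩
  have h1 : (⟨5, 2⟩ * ⟨5 * c - 2 * z.im, z.im - 2 * c⟩ : ℤ√(-1)).re = z.re := by
    rw [Zsqrtd.re_mul]; dsimp; omega
  have h2 : (⟨5, 2⟩ * ⟨5 * c - 2 * z.im, z.im - 2 * c⟩ : ℤ√(-1)).im = z.im := by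
    rw [Zsqrtd.im_mul]; dsimp; omega
  exact Zsqrtd.ext_iff.mpr ⟨h1.symm, h2.symm⟩

lemma pi_ne_zero : (⟨5, 2⟩ : ℤ√(-1)) ≠ 0 := by
  simp [Zsqrtd.ext_iff]

lemma h29 : (29 : ℤ√(-1)) = ⟨5, 2⟩ * ⟨5, -2⟩ := by
  rw [Zsqrtd.ext_iff, Zsqrtd.re_mul, Zsqrtd.im_mul]
  constructor <;> simp

lemma ψ_29 : ψ (29 : ℤ√(-1)) = 0 := by rw [map_ofNat]; decide

lemma ψ_290 : ψ (290 : ℤ√(-1)) = 0 := by rw [map_ofNat]; decide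

lemma ψ_10 : ψ (10 : ℤ√(-1)) = 10 := by rw [map_ofNat]

lemma ψ_pi : ψ (⟨5, 2⟩ : ℤ√(-1)) = 0 := by rw [ψ_apply]; decide

lemma ψ_pibar : ψ (⟨5, -2⟩ : ℤ√(-1)) = -19 := by rw [ψ_apply]; decide

lemma natAbs_norm_pi_mul (w : ℤ√(-1)) :
    ((⟨5, 2⟩ : ℤ√(-1)) * w).norm.natAbs = 29 * w.norm.natAbs := by
  rw [Zsqrtd.norm_mul]
  have h : ((⟨5, 2⟩ : ℤ√(-1)).norm) = 29 := by rw [Zsqrtd.norm_def]; ring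
  rw [h, Int.natAbs_mul]
  norm_num

lemma descent (n : ℕ) : ∀ z₁ z₂ z₃ z₄ : ℤ√(-1),
    z₁.norm.natAbs + z₂.norm.natAbs + z₃.norm.natAbs + z₄.norm.natAbs = n →
    z₁ ^ 2 = 10 * z₂ ^ 2 + 29 * z₃ ^ 2 - 290 * z₄ ^ 2 →
    z₁ = 0 ∧ z₂ = 0 ∧ z₃ = 0 ∧ z₄ = 0 := by
  induction n using Nat.strong_induction_on with
  | _ n ih =>
    intro z₁ z₂ z₃ z₄ hn heq
    rcases Nat.eq_zero_or_pos n with hz | hpos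
    · subst hz
      have h1 : z₁.norm = 0 := by
        have := Zsqrtd.norm_nonneg (by norm_num : (-1:ℤ) ≤ 0) z₁; omega
      have h2 : z₂.norm = 0 := by
        have := Zsqrtd.norm_nonneg (by norm_num : (-1:ℤ) ≤ 0) z₂; omega
      have h3 : z₃.norm = 0 := by
        have := Zsqrtd.norm_nonneg (by norm_num : (-1:ℤ) ≤ 0) z₃; omega
      have h4 : z₄.norm = 0 := by
        have := Zsqrtd.norm_nonneg (by norm_num : (-1:ℤ) ≤ 0) z₄; omega
      have hd : (-1 : ℤ) < 0 := by norm_num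
      exact ⟨(Zsqrtd.norm_eq_zero_iff hd z₁).mp h1, (Zsqrtd.norm_eq_zero_iff hd z₂).mp h2,
        (Zsqrtd.norm_eq_zero_iff hd z₃).mp h3, (Zsqrtd.norm_eq_zero_iff hd z₄).mp h4⟩
    · -- reduce mod π
      have hψ := congrArg ψ heq
      simp only [map_pow, map_add, map_sub, map_mul, ψ_29, ψ_290, ψ_10] at hψ
      have h12 : ψ z₁ ^ 2 = 10 * ψ z₂ ^ 2 := by linear_combination hψ
      obtain ⟨e1, e2⟩ := zmod_aux _ _ h12
      obtain ⟨w₁, hw₁⟩ := dvd_of_ψ_eq_zero z₁ e1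
      obtain ⟨w₂, hw₂⟩ := dvd_of_ψ_eq_zero z₂ e2
      -- cancel one π from the equation
      have key1 : (⟨5, 2⟩ : ℤ√(-1)) * w₁ ^ 2 =
          10 * ((⟨5, 2⟩ : ℤ√(-1)) * w₂ ^ 2) + (⟨5, -2⟩ : ℤ√(-1)) * z₃ ^ 2
            - 10 * ((⟨5, -2⟩ : ℤ√(-1)) * z₄ ^ 2) := by
        apply mul_left_cancel₀ pi_ne_zero
        rw [hw₁, hw₂] at heq
        linear_combination heq + (z₃ ^ 2 - 10 * z₄ ^ 2) * h29
      -- reduce mod π again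
      have hψ2 := congrArg ψ key1
      simp only [map_pow, map_add, map_sub, map_mul, ψ_10, ψ_pi, ψ_pibar] at hψ2
      have h34 : ψ z₃ ^ 2 = 10 * ψ z₄ ^ 2 := by
        have h290 : (29 : ZMod 29) = 0 := by decide
        linear_combination (-3 : ZMod 29) * hψ2 + (2 * ψ z₃ ^ 2 - 20 * ψ z₄ ^ 2) * h290
      obtain ⟨e3, e4⟩ := zmod_aux _ _ h34
      obtain ⟨w₃, hw₃⟩ := dvd_of_ψ_eq_zero z₃ e3
      obtain ⟨w₄, hw₄⟩ := dvd_of_ψ_eq_zero z₄ e4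
      have key2 : w₁ ^ 2 = 10 * w₂ ^ 2 + 29 * w₃ ^ 2 - 290 * w₄ ^ 2 := by
        apply mul_left_cancel₀ pi_ne_zero
        rw [hw₃, hw₄] at key1
        linear_combination key1 - (w₃ ^ 2 - 10 * w₄ ^ 2) * (⟨5, 2⟩ : ℤ√(-1)) * h29
      -- the measure strictly decreases
      have hm : 29 * (w₁.norm.natAbs + w₂.norm.natAbs + w₃.norm.natAbs + w₄.norm.natAbs) = n := by
        rw [← hn, hw₁, hw₂, hw₃, hw₄, natAbs_norm_pi_mul, natAbs_norm_pi_mul,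
          natAbs_norm_pi_mul, natAbs_norm_pi_mul]
        ring
      have hlt : w₁.norm.natAbs + w₂.norm.natAbs + w₃.norm.natAbs + w₄.norm.natAbs < n := by omega
      obtain ⟨g1, g2, g3, g4⟩ := ih _ hlt w₁ w₂ w₃ w₄ rfl key2
      exact ⟨by rw [hw₁, g1, mul_zero], by rw [hw₂, g2, mul_zero],
        by rw [hw₃, g3, mul_zero], by rw [hw₄, g4, mul_zero]⟩

noncomputable section

abbrev K := CyclotomicField 4 ℚ

instance : IsCyclotomicExtension {4} ℚ K := CyclotomicField.isCyclotomicExtension 4 ℚ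

noncomputable def ζ : K := IsCyclotomicExtension.zeta 4 ℚ K

lemma hζ : IsPrimitiveRoot ζ ((4 : ℕ+) : ℕ) := IsCyclotomicExtension.zeta_spec 4 ℚ K

lemma ζ_sq : ζ * ζ = ((-1 : ℤ) : K) := by
  have e4 : ((4 : ℕ+) : ℕ) = 4 := by decide
  have h4 : ζ ^ (4 : ℕ) = 1 := by exact hζ.pow_eq_one
  have h2 : ζ ^ 2 ≠ 1 :=
    hζ.pow_ne_one_of_pos_of_lt (by norm_num) (by rw [e4]; norm_num)
  have hsq : (ζ ^ 2) ^ 2 = 1 := by rw [← pow_mul]; exact h4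
  have hfac : (ζ ^ 2 - 1) * (ζ ^ 2 + 1) = 0 := by linear_combination hsq
  rcases mul_eq_zero.mp hfac with h | h
  · exact absurd (by linear_combination h) h2
  · push_cast
    linear_combination h

/-- The embedding `ℤ[i] → ℚ(i)`. -/
noncomputable def φ : ℤ√(-1) →+* K := Zsqrtd.lift ⟨ζ, ζ_sq⟩

lemma φ_injective : Function.Injective φ := by
  apply Zsqrtd.lift_injective
  intro m
  nlinarith [mul_self_nonneg m]

lemma denom (x : K) : ∃ (z : ℤ√(-1)) (n : ℤ), n ≠ 0 ∧ (n : K) * x = φ z := by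
  have hx : x ∈ Algebra.adjoin ℚ ({ζ} : Set K) := by
    rw [IsCyclotomicExtension.adjoin_primitive_root_eq_top (n := 4) hζ]; trivial
  induction hx using Algebra.adjoin_induction with
  | mem y hy =>
    rw [Set.mem_singleton_iff] at hy
    subst hy
    refine ⟨⟨0, 1⟩, 1, one_ne_zero, ?_⟩
    simp [φ, Zsqrtd.lift]
  | algebraMap q =>
    refine ⟨⟨q.num, 0⟩, (q.den : ℤ), by exact_mod_cast q.den_ne_zero, ?_⟩
    have hq : algebraMap ℚ K q = (q : K) := map_ratCast _ q
    rw [hq]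
    simp only [φ, Zsqrtd.lift, Equiv.coe_fn_mk, RingHom.coe_mk, MonoidHom.coe_mk, OneHom.coe_mk]
    have hd : ((q.den : ℚ) : K) ≠ 0 := by
      rw [Rat.cast_ne_zero]
      exact_mod_cast q.den_ne_zero
    push_cast
    rw [Rat.cast_def]
    field_simp
    ring
  | add y z hy hz ihy ihz =>
    obtain ⟨a, n, hn, ha⟩ := ihy
    obtain ⟨b, m, hm, hb⟩ := ihz
    refine ⟨(m : ℤ√(-1)) * a + (n : ℤ√(-1)) * b, n * m, mul_ne_zero hn hm, ?_⟩
    rw [map_add, map_mul, map_mul, map_intCast, map_intCast]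
    push_cast
    linear_combination (m : K) * ha + (n : K) * hb
  | mul y z hy hz ihy ihz =>
    obtain ⟨a, n, hn, ha⟩ := ihy
    obtain ⟨b, m, hm, hb⟩ := ihz
    refine ⟨a * b, n * m, mul_ne_zero hn hm, ?_⟩
    rw [map_mul]
    push_cast
    linear_combination ((m : K) * z) * ha + φ a * hb

lemma anisotropic (x₁ x₂ x₃ x₄ : K)
    (h : x₁ ^ 2 = 10 * x₂ ^ 2 + 29 * x₃ ^ 2 - 290 * x₄ ^ 2) :
    x₁ = 0 ∧ x₂ = 0 ∧ x₃ = 0 ∧ x₄ = 0 := by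
  obtain ⟨z₁, n₁, hn₁, h₁⟩ := denom x₁
  obtain ⟨z₂, n₂, hn₂, h₂⟩ := denom x₂
  obtain ⟨z₃, n₃, hn₃, h₃⟩ := denom x₃
  obtain ⟨z₄, n₄, hn₄, h₄⟩ := denom x₄
  set N : ℤ := n₁ * n₂ * n₃ * n₄ with hN
  have hNne : N ≠ 0 := mul_ne_zero (mul_ne_zero (mul_ne_zero hn₁ hn₂) hn₃) hn₄
  set Z₁ : ℤ√(-1) := ((n₂ * n₃ * n₄ : ℤ) : ℤ√(-1)) * z₁ with hZ₁
  set Z₂ : ℤ√(-1) := ((n₁ * n₃ * n₄ : ℤ) : ℤ√(-1)) * z₂ with hZ₂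
  set Z₃ : ℤ√(-1) := ((n₁ * n₂ * n₄ : ℤ) : ℤ√(-1)) * z₃ with hZ₃
  set Z₄ : ℤ√(-1) := ((n₁ * n₂ * n₃ : ℤ) : ℤ√(-1)) * z₄ with hZ₄
  have e₁ : φ Z₁ = (N : K) * x₁ := by
    rw [hZ₁, map_mul, map_intCast, hN]; push_cast; linear_combination (-((n₂ : K) * n₃ * n₄)) * h₁
  have e₂ : φ Z₂ = (N : K) * x₂ := by
    rw [hZ₂, map_mul, map_intCast, hN]; push_cast; linear_combination (-((n₁ : K) * n₃ * n₄)) * h₂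
  have e₃ : φ Z₃ = (N : K) * x₃ := by
    rw [hZ₃, map_mul, map_intCast, hN]; push_cast; linear_combination (-((n₁ : K) * n₂ * n₄)) * h₃
  have e₄ : φ Z₄ = (N : K) * x₄ := by
    rw [hZ₄, map_mul, map_intCast, hN]; push_cast; linear_combination (-((n₁ : K) * n₂ * n₃)) * h₄
  have hint : Z₁ ^ 2 = 10 * Z₂ ^ 2 + 29 * Z₃ ^ 2 - 290 * Z₄ ^ 2 := by
    apply φ_injective
    simp only [map_pow, map_add, map_sub, map_mul, map_ofNat]
    rw [e₁, e₂, e₃, e₄]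
    linear_combination ((N : K)) ^ 2 * h
  obtain ⟨g₁, g₂, g₃, g₄⟩ := descent _ Z₁ Z₂ Z₃ Z₄ rfl hint
  have hNK : (N : K) ≠ 0 := by exact_mod_cast hNne
  refine ⟨?_, ?_, ?_, ?_⟩
  · have e := e₁; rw [g₁, map_zero] at e
    exact (mul_eq_zero.mp e.symm).resolve_left hNK
  · have e := e₂; rw [g₂, map_zero] at e
    exact (mul_eq_zero.mp e.symm).resolve_left hNK
  · have e := e₃; rw [g₃, map_zero] at e
    exact (mul_eq_zero.mp e.symm).resolve_left hNK
  · have e := e₄; rw [g₄, map_zero] at e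
    exact (mul_eq_zero.mp e.symm).resolve_left hNK

end

end Stmt10Aux

/-- The quaternion algebra `(10, 29)` over `ℚ(i)` is a division
algebra. -/
theorem stmt10 :
    ∀ x : ℍ[CyclotomicField 4 ℚ, (10 : CyclotomicField 4 ℚ), (29 : CyclotomicField 4 ℚ)],
      x ≠ 0 → IsUnit x := by
  intro x hx
  set n : CyclotomicField 4 ℚ :=
    x.re ^ 2 - 10 * x.imI ^ 2 - 29 * x.imJ ^ 2 + 290 * x.imK ^ 2 with hn
  have hstar : star x = ⟨x.re, -x.imI, -x.imJ, -x.imK⟩ := by ext <;> simp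
  have hmul : x * star x = (n : ℍ[CyclotomicField 4 ℚ, 10, 29]) := by
    rw [QuaternionAlgebra.mul_star_eq_coe]
    congr 1
    rw [hstar, QuaternionAlgebra.re_mul]
    dsimp
    ring
  have hne : n ≠ 0 := by
    intro h0
    apply hx
    have h' : x.re ^ 2 = 10 * x.imI ^ 2 + 29 * x.imJ ^ 2 - 290 * x.imK ^ 2 := by
      rw [hn] at h0
      linear_combination h0
    obtain ⟨g₁, g₂, g₃, g₄⟩ := Stmt10Aux.anisotropic _ _ _ _ h'
    ext <;> simp [g₁, g₂, g₃, g₄]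
  refine isUnit_iff_exists.mpr
    ⟨((n⁻¹ : CyclotomicField 4 ℚ) : ℍ[CyclotomicField 4 ℚ, 10, 29]) * star x, ?_, ?_⟩
  · rw [QuaternionAlgebra.coe_commutes, ← mul_assoc, hmul, ← QuaternionAlgebra.coe_mul,
      mul_inv_cancel₀ hne, QuaternionAlgebra.coe_one]
  · rw [mul_assoc, star_comm_self', hmul, ← QuaternionAlgebra.coe_mul,
      inv_mul_cancel₀ hne, QuaternionAlgebra.coe_one]
end

section
/- The integer 29 is not a norm from the extension ℚ(i) ⊆ ℚ(i)(√10); that is, there is no element z in ℚ(i)(√10) with N(z) = 29, where N is the field norm to ℚ(i). -/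
open Polynomial

local instance f29 : Fact (Nat.Prime 29) := ⟨by norm_num⟩

/-- A square root of -1 in ℤ_[29], by Hensel's lemma from the approximate root 12. -/
lemma stmt11_sq_neg_one : ∃ t : ℤ_[29], t^2 = -1 := by
  have h5 : ‖(5 : ℤ_[29])‖ = 1 := by
    have h := (PadicInt.norm_int_lt_one_iff_dvd (p := 29) 5)
    push_cast at h
    rcases lt_or_eq_of_le (PadicInt.norm_le_one (5 : ℤ_[29])) with h' | h'
    · exact absurd (h.mp h') (by norm_num)
    · exact h'
  have h24 : ‖(24 : ℤ_[29])‖ = 1 := by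
    have h := (PadicInt.norm_int_lt_one_iff_dvd (p := 29) 24)
    push_cast at h
    rcases lt_or_eq_of_le (PadicInt.norm_le_one (24 : ℤ_[29])) with h' | h'
    · exact absurd (h.mp h') (by norm_num)
    · exact h'
  have h145 : ‖(145 : ℤ_[29])‖ = (29:ℝ)⁻¹ := by
    have : (145 : ℤ_[29]) = 29 * 5 := by norm_num
    rw [this, norm_mul, h5, show ((29:ℤ_[29])) = ((29:ℕ):ℤ_[29]) by norm_cast,
      PadicInt.norm_p]
    push_cast; ring
  have hnorm : ‖(X^2+1 : ℤ_[29][X]).eval 12‖ < ‖(X^2+1 : ℤ_[29][X]).derivative.eval 12‖^2 := by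
    have h1 : (X^2+1 : ℤ_[29][X]).eval 12 = 145 := by norm_num
    have h2 : (X^2+1 : ℤ_[29][X]).derivative.eval 12 = 24 := by
      simp; norm_num
    rw [h1, h2, h145, h24]
    norm_num
  obtain ⟨z, hz, -⟩ := hensels_lemma hnorm
  refine ⟨z, ?_⟩
  simp only [map_add, map_pow, aeval_X, map_one] at hz
  linear_combination hz

/-- The cyclotomic field ℚ(ζ₄) = ℚ(i) embeds into ℚ_[29]. -/
lemma stmt11_embedding : Nonempty (CyclotomicField 4 ℚ →ₐ[ℚ] ℚ_[29]) := by
  obtain ⟨t0, ht0⟩ := stmt11_sq_neg_one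
  set t : ℚ_[29] := (t0 : ℚ_[29]) with htdef
  have ht : t^2 = -1 := by
    rw [htdef]
    exact_mod_cast congrArg (fun z : ℤ_[29] => (z : ℚ_[29])) ht0
  have hc : (cyclotomic 4 ℚ_[29]) = X^2 + 1 := by
    have := cyclotomic_prime_pow_eq_geom_sum (R := ℚ_[29]) (p := 2) (n := 1) (by norm_num)
    norm_num [Finset.sum_range_succ] at this
    rw [this]; ring
  have hC : (C t)^2 = (-1 : ℚ_[29][X]) := by rw [← map_pow, ht]; simp
  have hsplits : Splits ((cyclotomic 4 ℚ).map (algebraMap ℚ ℚ_[29])) := by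
    rw [map_cyclotomic, hc,
      show (X^2 + 1 : ℚ_[29][X]) = (X - C t) * (X + C t) by linear_combination hC]
    refine Splits.mul (Splits.X_sub_C _) ?_
    rw [show (X + C t : ℚ_[29][X]) = X - C (-t) by simp]
    exact Splits.X_sub_C _
  haveI : IsSplittingField ℚ (CyclotomicField 4 ℚ) (cyclotomic 4 ℚ) :=
    @IsCyclotomicExtension.splitting_field_cyclotomic 4 _ ℚ (CyclotomicField 4 ℚ) _ _ _ (CyclotomicField.isCyclotomicExtension 4 ℚ)
  exact ⟨Polynomial.IsSplittingField.lift (L := CyclotomicField 4 ℚ) (cyclotomic 4 ℚ) hsplits⟩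

/-- The norm form of the extension generated by √10. -/
lemma stmt11_norm_form {K : Type*} [Field K] : ∀ z : AdjoinRoot (X ^ 2 - C (10 : K)),
    ∃ a b : K, Algebra.norm K z = a ^ 2 - 10 * b ^ 2 := by
  set f : K[X] := X ^ 2 - C 10 with hf
  intro z
  have hmonic : f.Monic := by apply monic_X_pow_sub_C; norm_num
  have hdeg : f.natDegree = 2 := by rw [hf]; compute_degree!
  have hne : f ≠ 0 := hmonic.ne_zero
  set pb := AdjoinRoot.powerBasis hne with hpb
  have hd : pb.dim = 2 := by rw [hpb, AdjoinRoot.powerBasis_dim, hdeg]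
  set θ : AdjoinRoot f := AdjoinRoot.root f with hθdef
  have hθ2 : θ ^ 2 = algebraMap K (AdjoinRoot f) 10 := by
    have h := AdjoinRoot.eval₂_root f
    rw [hf] at h
    simp only [eval₂_sub, eval₂_pow, eval₂_X, eval₂_C] at h
    rw [AdjoinRoot.algebraMap_eq]
    exact sub_eq_zero.mp h
  set b' : Module.Basis (Fin 2) K (AdjoinRoot f) := pb.basis.reindex (finCongr hd) with hb'
  have hb0 : b' 0 = 1 := by
    rw [hb', Module.Basis.reindex_apply, pb.basis_eq_pow]; simp
  have hb1 : b' 1 = θ := by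
    rw [hb', Module.Basis.reindex_apply, pb.basis_eq_pow]
    simp [hpb, AdjoinRoot.powerBasis_gen, hθdef]
  set a : K := b'.repr z 0 with ha
  set b : K := b'.repr z 1 with hbdef
  have hz : z = a • b' 0 + b • b' 1 := by
    have := b'.sum_repr z
    rw [Fin.sum_univ_two] at this
    exact this.symm
  have hrepr : ∀ c d : K, ∀ i, b'.repr (c • b' 0 + d • b' 1) i
      = (c • Finsupp.single (0 : Fin 2) (1:K) + d • Finsupp.single 1 1 : Fin 2 →₀ K) i := by
    intro c d i
    rw [map_add, map_smul, map_smul, b'.repr_self, b'.repr_self]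
  have hmul1 : z * b' 1 = (10 * b) • b' 0 + a • b' 1 := by
    calc z * b' 1 = (a • b' 0 + b • b' 1) * b' 1 := by rw [← hz]
    _ = (10 * b) • b' 0 + a • b' 1 := by
        rw [hb0, hb1, add_mul, smul_mul_assoc, smul_mul_assoc, one_mul, ← pow_two, hθ2,
          Algebra.algebraMap_eq_smul_one, smul_smul, mul_comm b 10, add_comm]
  have hmul0 : z * b' 0 = a • b' 0 + b • b' 1 := by
    conv_lhs => rw [hb0, mul_one, hz]
  refine ⟨a, b, ?_⟩
  rw [Algebra.norm_eq_matrix_det b' z, Matrix.det_fin_two]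
  simp only [Algebra.leftMulMatrix_eq_repr_mul, hmul1, hmul0, hrepr]
  simp [Finsupp.single_apply]
  ring

lemma stmt11_zmod_key : ∀ u v : ZMod 29, u^2 = 10 * v^2 → u = 0 ∧ v = 0 := by decide

lemma stmt11_dvd_of_toZMod_eq_zero (x : ℤ_[29]) (h : PadicInt.toZMod x = 0) :
    (29 : ℤ_[29]) ∣ x := by
  have hx : x ∈ RingHom.ker (PadicInt.toZMod : ℤ_[29] →+* ZMod 29) := h
  rw [PadicInt.ker_toZMod, PadicInt.maximalIdeal_eq_span_p, Ideal.mem_span_singleton] at hx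
  exact_mod_cast hx

lemma stmt11_norm29 : ‖(29:ℤ_[29])‖ = (29:ℝ)⁻¹ := by
  rw [show ((29:ℤ_[29])) = ((29:ℕ):ℤ_[29]) by norm_cast, PadicInt.norm_p]; norm_num

lemma stmt11_h29ne : (29:ℤ_[29]) ≠ 0 := by
  intro hc
  have := congrArg (fun z : ℤ_[29] => ‖z‖) hc
  simp only [stmt11_norm29, norm_zero] at this
  norm_num at this

lemma stmt11_step (k : ℕ) (x y : ℤ_[29]) (h : x^2 - 10*y^2 = 29^(2*k+1)) :
    ∃ x' y' : ℤ_[29], x = 29*x' ∧ y = 29*y' := by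
  have h29 : PadicInt.toZMod (29 : ℤ_[29]) = 0 := by
    rw [show ((29:ℤ_[29])) = ((29:ℕ):ℤ_[29]) by norm_cast, map_natCast]
    decide
  have hz : (PadicInt.toZMod x)^2 = 10 * (PadicInt.toZMod y)^2 := by
    have h' := congrArg PadicInt.toZMod h
    simp only [map_sub, map_mul, map_pow, map_ofNat, h29, zero_pow, Nat.add_eq_zero,
      Nat.succ_ne_zero, and_false, ne_eq, not_false_iff] at h'
    have hz0 : (29:ZMod 29) = 0 := by decide
    linear_combination h' + (29:ZMod 29)^(2*k) * hz0
  obtain ⟨hx0, hy0⟩ := stmt11_zmod_key _ _ hz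
  obtain ⟨x', hx'⟩ := stmt11_dvd_of_toZMod_eq_zero x hx0
  obtain ⟨y', hy'⟩ := stmt11_dvd_of_toZMod_eq_zero y hy0
  exact ⟨x', y', hx', hy'⟩

lemma stmt11_descent : ∀ m : ℕ, ∀ x y : ℤ_[29], x^2 - 10*y^2 = 29^(2*m+1) → False := by
  intro m
  induction m with
  | zero =>
    intro x y h
    obtain ⟨x', y', hx', hy'⟩ := stmt11_step 0 x y h
    rw [hx', hy'] at h
    have hcancel : (29:ℤ_[29]) * (29 * (x'^2 - 10*y'^2)) = 29 * 1 := by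
      linear_combination h
    have hu : (29:ℤ_[29]) * (x'^2 - 10*y'^2) = 1 := by
      have := mul_left_cancel₀ stmt11_h29ne hcancel
      linear_combination this
    have hnorm := congrArg (fun z : ℤ_[29] => ‖z‖) hu
    simp only [norm_mul, norm_one, stmt11_norm29] at hnorm
    have hle := PadicInt.norm_le_one (x'^2 - 10*y'^2)
    nlinarith [hnorm, hle]
  | succ m ih =>
    intro x y h
    obtain ⟨x', y', hx', hy'⟩ := stmt11_step (m+1) x y h
    rw [hx', hy'] at h
    have hcancel : (29:ℤ_[29]) * (29 * (x'^2 - 10*y'^2)) = 29 * (29 * 29^(2*m+1)) := by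
      rw [show (29:ℤ_[29])^(2*(m+1)+1) = 29*(29*29^(2*m+1)) from by ring] at h
      linear_combination h
    exact ih x' y' (mul_left_cancel₀ stmt11_h29ne (mul_left_cancel₀ stmt11_h29ne hcancel))

lemma stmt11_qp_no_sol (a b : ℚ_[29]) (h : a^2 - 10*b^2 = 29) : False := by
  have h29 : ‖(29:ℚ_[29])‖ = (29:ℝ)⁻¹ := by
    rw [show ((29:ℚ_[29])) = ((29:ℕ):ℚ_[29]) by norm_cast]
    exact Padic.norm_p
  obtain ⟨n₁, hn₁⟩ := pow_unbounded_of_one_lt (y := (29:ℝ)) ‖a‖ (by norm_num)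
  obtain ⟨n₂, hn₂⟩ := pow_unbounded_of_one_lt (y := (29:ℝ)) ‖b‖ (by norm_num)
  set n := max n₁ n₂ with hn
  have hpow : ∀ c : ℚ_[29], ‖c‖ < 29^n → ‖(29:ℚ_[29])^n * c‖ ≤ 1 := by
    intro c hc
    rw [norm_mul, norm_pow, h29]
    have h1 : (0:ℝ) < 29 ^ n := by positivity
    rw [inv_pow]
    rw [inv_mul_le_iff₀ h1]
    linarith [hc]
  have ha' : ‖a‖ < 29^n := lt_of_lt_of_le hn₁ (by gcongr <;> [norm_num; exact le_max_left _ _])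
  have hb' : ‖b‖ < 29^n := lt_of_lt_of_le hn₂ (by gcongr <;> [norm_num; exact le_max_right _ _])
  set x : ℤ_[29] := ⟨29^n * a, hpow a ha'⟩ with hx
  set y : ℤ_[29] := ⟨29^n * b, hpow b hb'⟩ with hy
  apply stmt11_descent n x y
  apply Subtype.ext
  push_cast [hx, hy]
  have c10 : ((10:ℤ_[29]):ℚ_[29]) = 10 := by norm_cast
  have c29 : ((29:ℤ_[29]):ℚ_[29]) = 29 := by norm_cast
  rw [c10, c29]
  show ((29:ℚ_[29])^n*a)^2 - 10*((29:ℚ_[29])^n*b)^2 = 29^(2*n+1)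
  linear_combination (29:ℚ_[29])^(2*n) * h

/-- `29` is not a norm from the extension `ℚ(i) ⊆ ℚ(i)(√10)`. -/
theorem stmt11 :
    ¬ ∃ z : AdjoinRoot (X ^ 2 - C (10 : CyclotomicField 4 ℚ)),
        Algebra.norm (CyclotomicField 4 ℚ) z = 29 := by
  rintro ⟨z, hz⟩
  obtain ⟨a, b, hab⟩ := stmt11_norm_form z
  rw [hz] at hab
  obtain ⟨φ⟩ := stmt11_embedding
  apply stmt11_qp_no_sol (φ a) (φ b)
  have h := congrArg φ hab.symm
  simp only [map_sub, map_mul, map_pow, map_ofNat] at h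
  exact h
end

section
/- A quaternion algebra (α, β) over a field K (char K ≠ 2) is split if and only if β is a norm from the extension K ⊆ K(√α). -/
open Quaternion Polynomial

private theorem normAdjoin (K : Type*) [Field K] (α β : K) :
    (∃ z : AdjoinRoot (X ^ 2 - C α), Algebra.norm K z = β) ↔
      ∃ c d : K, c ^ 2 - α * d ^ 2 = β := by
  have hmon : Monic (X ^ 2 - C α : K[X]) := monic_X_pow_sub_C α (by norm_num)
  have hne : (X ^ 2 - C α : K[X]) ≠ 0 := hmon.ne_zero
  set pb := AdjoinRoot.powerBasis hne with hpb
  have hdim : pb.dim = 2 := by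
    simp [hpb, AdjoinRoot.powerBasis, natDegree_X_pow_sub_C]
  set b : Module.Basis (Fin 2) K (AdjoinRoot (X ^ 2 - C α)) :=
    pb.basis.reindex (finCongr hdim) with hb
  have hb0 : b 0 = 1 := by
    simp [hb, Module.Basis.reindex_apply, PowerBasis.coe_basis]
  have hb1 : b 1 = AdjoinRoot.root (X ^ 2 - C α) := by
    simp [hb, hpb, Module.Basis.reindex_apply, PowerBasis.coe_basis, AdjoinRoot.powerBasis_gen]
  have hroot : (AdjoinRoot.root (X ^ 2 - C α)) ^ 2 = algebraMap K _ α := by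
    have := AdjoinRoot.eval₂_root (X ^ 2 - C α)
    simpa [sub_eq_zero] using this
  have key : ∀ c d : K,
      Algebra.norm K (algebraMap K _ c + d • AdjoinRoot.root (X ^ 2 - C α)) =
        c ^ 2 - α * d ^ 2 := by
    intro c d
    rw [Algebra.norm_eq_matrix_det b]
    have h0 : (algebraMap K _ c + d • AdjoinRoot.root (X ^ 2 - C α)) * b 0
        = c • b 0 + d • b 1 := by
      rw [hb0, hb1]; simp [Algebra.smul_def]
    have h1 : (algebraMap K _ c + d • AdjoinRoot.root (X ^ 2 - C α)) * b 1
        = (d * α) • b 0 + c • b 1 := by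
      rw [hb0, hb1, add_mul, smul_mul_assoc, ← pow_two, hroot]
      simp [Algebra.smul_def, map_mul]; ring
    rw [AdjoinRoot.algebraMap_eq] at h0 h1
    have hmat : Algebra.leftMulMatrix b
        (algebraMap K _ c + d • AdjoinRoot.root (X ^ 2 - C α)) = !![c, d * α; d, c] := by
      ext i j
      rw [Algebra.leftMulMatrix_eq_repr_mul]
      fin_cases j <;> fin_cases i <;>
        simp [h0, h1, Finsupp.single_apply]
    rw [hmat, Matrix.det_fin_two_of]
    ring
  constructor
  · rintro ⟨z, hz⟩
    have hz2 : z = algebraMap K _ (b.repr z 0) +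
        (b.repr z 1) • AdjoinRoot.root (X ^ 2 - C α) := by
      conv_lhs => rw [← b.sum_repr z]
      rw [Fin.sum_univ_two, hb0, hb1, Algebra.smul_def, mul_one]
    exact ⟨_, _, by rw [← key, ← hz2, hz]⟩
  · rintro ⟨c, d, h⟩
    exact ⟨_, (key c d).trans h⟩

private theorem splitOf (K : Type*) [Field K] (hchar : (2 : K) ≠ 0) (α β : K)
    (hα : α ≠ 0) (hβ : β ≠ 0) (c d : K) (hcd : c ^ 2 - α * d ^ 2 = β) :
    Nonempty (ℍ[K, α, β] ≃ₐ[K] Matrix (Fin 2) (Fin 2) K) := by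
  subst hcd
  set β := c ^ 2 - α * d ^ 2 with hβdef
  let qb : QuaternionAlgebra.Basis (Matrix (Fin 2) (Fin 2) K) α 0 β :=
    { i := !![0, α; 1, 0]
      j := !![c, -(d * α); d, -c]
      k := !![d * α, -(c * α); c, -(d * α)]
      i_mul_i := by
        ext i j
        fin_cases i <;> fin_cases j <;>
          simp [Matrix.mul_apply, Fin.sum_univ_two, Matrix.smul_apply, Matrix.one_apply]
      j_mul_j := by
        ext i j
        fin_cases i <;> fin_cases j <;>
          simp [hβdef, Matrix.mul_apply, Fin.sum_univ_two, Matrix.smul_apply, Matrix.one_apply]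
        all_goals ring
      i_mul_j := by
        ext i j
        fin_cases i <;> fin_cases j <;>
          simp [Matrix.mul_apply, Fin.sum_univ_two] <;> ring
      j_mul_i := by
        ext i j
        fin_cases i <;> fin_cases j <;>
          simp [Matrix.mul_apply, Fin.sum_univ_two] <;> ring }
  let φ := qb.liftHom
  have hsurj : Function.Surjective φ := by
    intro M
    refine ⟨⟨(M 0 0 + M 1 1) / 2, (α * M 1 0 + M 0 1) / (2 * α),
      (c * (M 0 0 - M 1 1) - d * (α * M 1 0 - M 0 1)) / (2 * β),
      (c * (α * M 1 0 - M 0 1) - d * α * (M 0 0 - M 1 1)) / (2 * α * β)⟩, ?_⟩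
    show qb.lift _ = M
    rw [QuaternionAlgebra.Basis.lift]
    ext i j
    fin_cases i <;> fin_cases j <;>
      · simp only [qb, Matrix.add_apply, Matrix.smul_apply, Matrix.algebraMap_matrix_apply,
          Matrix.cons_val', Matrix.cons_val_zero, Matrix.cons_val_one, Matrix.head_cons,
          Matrix.head_fin_const, Matrix.empty_val', Matrix.cons_val_fin_one, Fin.isValue,
          Fin.zero_eta, Fin.mk_one, smul_eq_mul, if_true, if_false, Ne, one_ne_zero,
          zero_ne_one, not_false_iff, reduceIte, Matrix.of_apply,
          Algebra.algebraMap_self, RingHom.id_apply]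
        field_simp
        ring
  have hinj : Function.Injective φ := by
    have h4 : Module.finrank K ℍ[K, α, β] =
        Module.finrank K (Matrix (Fin 2) (Fin 2) K) := by
      rw [QuaternionAlgebra.finrank_eq_four, Module.finrank_matrix]
      simp
    exact (LinearMap.injective_iff_surjective_of_finrank_eq_finrank
      (f := φ.toLinearMap) h4).2 hsurj
  exact ⟨AlgEquiv.ofBijective φ ⟨hinj, hsurj⟩⟩

private theorem quatNorm (K : Type*) [Field K] (α β : K) (q : ℍ[K,α,β]) :
    star q * q = ((q.re^2 - α*q.imI^2 - β*q.imJ^2 + α*β*q.imK^2 : K) : ℍ[K,α,β]) ∧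
    q * star q = ((q.re^2 - α*q.imI^2 - β*q.imJ^2 + α*β*q.imK^2 : K) : ℍ[K,α,β]) := by
  have hcoe : ((q.re^2 - α*q.imI^2 - β*q.imJ^2 + α*β*q.imK^2 : K) : ℍ[K,α,β]) =
      ⟨q.re^2 - α*q.imI^2 - β*q.imJ^2 + α*β*q.imK^2, 0, 0, 0⟩ := rfl
  rw [hcoe]
  constructor <;> (ext <;> simp <;> ring)

private theorem existsNormZero (K : Type*) [Field K] (α β : K)
    (e : ℍ[K,α,β] ≃ₐ[K] Matrix (Fin 2) (Fin 2) K) :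
    ∃ q : ℍ[K,α,β], q ≠ 0 ∧
      q.re^2 - α*q.imI^2 - β*q.imJ^2 + α*β*q.imK^2 = 0 := by
  set q1 := e.symm !![1,0;0,0] with hq1
  set q2 := e.symm !![0,0;0,1] with hq2
  have h12 : q1 * q2 = 0 := by
    apply e.injective
    rw [map_mul, map_zero, hq1, hq2, AlgEquiv.apply_symm_apply, AlgEquiv.apply_symm_apply]
    ext i j
    fin_cases i <;> fin_cases j <;> simp [Matrix.mul_apply, Fin.sum_univ_two]
  have hq1ne : q1 ≠ 0 := by
    intro h
    have h2 : (!![1,0;0,0] : Matrix (Fin 2) (Fin 2) K) = 0 := by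
      have := congrArg e h
      rwa [AlgEquiv.apply_symm_apply, map_zero] at this
    have := congrFun (congrFun h2 0) 0
    simp at this
  have hq2ne : q2 ≠ 0 := by
    intro h
    have h2 : (!![0,0;0,1] : Matrix (Fin 2) (Fin 2) K) = 0 := by
      have := congrArg e h
      rwa [AlgEquiv.apply_symm_apply, map_zero] at this
    have := congrFun (congrFun h2 1) 1
    simp at this
  set n : ℍ[K,α,β] → K := fun q => q.re^2 - α*q.imI^2 - β*q.imJ^2 + α*β*q.imK^2 with hn
  have hzero : ((n q1 * n q2 : K) : ℍ[K,α,β]) = 0 := by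
    have : (star q1 * q1) * (q2 * star q2) = 0 := by
      rw [mul_assoc, ← mul_assoc q1, h12, zero_mul, mul_zero]
    rw [(quatNorm K α β q1).1, (quatNorm K α β q2).2, ← QuaternionAlgebra.coe_mul] at this
    exact this
  have : n q1 * n q2 = 0 := by
    have h0 : ((0 : K) : ℍ[K,α,β]) = 0 := QuaternionAlgebra.coe_zero
    exact QuaternionAlgebra.coe_injective (hzero.trans h0.symm)
  rcases mul_eq_zero.1 this with h | h
  · exact ⟨q1, hq1ne, h⟩
  · exact ⟨q2, hq2ne, h⟩

/-- A quaternion algebra `(α, β)` over a field `K` of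
characteristic `≠ 2` (with `α, β ∈ K*`) is split iff `β` is a norm from the
extension `K ⊆ K(√α)`. -/
theorem stmt12 (K : Type*) [Field K] (hchar : (2 : K) ≠ 0) (α β : K)
    (hα : α ≠ 0) (hβ : β ≠ 0) :
    Nonempty (ℍ[K, α, β] ≃ₐ[K] Matrix (Fin 2) (Fin 2) K) ↔
      ∃ z : AdjoinRoot (X ^ 2 - C α), Algebra.norm K z = β := by
  rw [normAdjoin]
  constructor
  · rintro ⟨e⟩
    by_cases hsq : ∃ s : K, s ^ 2 = α
    · obtain ⟨s, hs⟩ := hsq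
      have hs0 : s ≠ 0 := by
        intro h; rw [h] at hs; simp at hs; exact hα hs.symm
      refine ⟨(β + 1) / 2, (1 - β) / (2 * s), ?_⟩
      rw [← hs]
      field_simp
      ring
    · obtain ⟨q, hqne, hqn⟩ := existsNormZero K α β e
      obtain ⟨w, x, y, z⟩ := q
      simp only at hqn
      have hD : y ^ 2 - α * z ^ 2 ≠ 0 := by
        intro hD0
        have hz0 : z = 0 := by
          by_contra hz
          exact hsq ⟨y / z, by field_simp at hD0 ⊢; linear_combination hD0⟩
        have hy0 : y = 0 := by
          rw [hz0] at hD0; simpa using hD0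
        have hwx : w ^ 2 - α * x ^ 2 = 0 := by
          rw [hy0, hz0] at hqn; linear_combination hqn
        have hx0 : x = 0 := by
          by_contra hx
          exact hsq ⟨w / x, by field_simp at hwx ⊢; linear_combination hwx⟩
        have hw0 : w = 0 := by
          rw [hx0] at hwx; simpa using hwx
        exact hqne (by ext <;> simp [hw0, hx0, hy0, hz0])
      refine ⟨(w * y + α * x * z) / (y ^ 2 - α * z ^ 2),
        (w * z + x * y) / (y ^ 2 - α * z ^ 2), ?_⟩
      field_simp
      linear_combination (y ^ 2 - α * z ^ 2) * hqn
  · rintro ⟨c, d, hcd⟩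
    exact splitOf K hchar α β hα hβ c d hcd
end

section
/- Let p' be a prime with p' ≡ 1 (mod 4), and let p be an odd prime divisor of an integer α such that every prime divisor of α is a quadratic residue modulo p'. Then the Hilbert symbol (α, p')_p over ℚ equals 1. -/
open Classical in
/-- The Hilbert symbol `(a, b)_p` over the `p`-adic field `ℚ_p`. -/
noncomputable def hilbertSymbol (p : ℕ) [Fact p.Prime] (a b : ℚ_[p]) : ℤ :=
  if ∃ x y z : ℚ_[p], (x, y, z) ≠ (0, 0, 0) ∧ a * x ^ 2 + b * y ^ 2 = z ^ 2
  then 1 else -1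

/-- A nonzero square mod `p` of an integer not divisible by odd `p` lifts to `ℤ_[p]`. -/
lemma exists_padic_sqrt (p : ℕ) [hp : Fact p.Prime] (hodd : p ≠ 2) (n : ℤ)
    (hn : ¬ (p : ℤ) ∣ n) (hsq : IsSquare ((n : ZMod p))) :
    ∃ z : ℚ_[p], z ^ 2 = (n : ℚ_[p]) := by
  obtain ⟨c, hc⟩ := hsq
  set a0 : ℤ := (c.val : ℤ) with ha0
  have hc0 : c ≠ 0 := by
    rintro rfl
    apply hn
    rw [← ZMod.intCast_zmod_eq_zero_iff_dvd, hc, mul_zero]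
  have hcast : ((a0 : ℤ) : ZMod p) = c := by
    simp [ha0, ZMod.natCast_val, ZMod.cast_id]
  -- the polynomial X^2 - n
  set F : Polynomial ℤ_[p] := Polynomial.X ^ 2 - Polynomial.C (n : ℤ_[p]) with hF
  set a : ℤ_[p] := (a0 : ℤ_[p]) with ha
  have hevala : F.eval a = ((a0 ^ 2 - n : ℤ) : ℤ_[p]) := by
    simp [hF, ha]
  have hderiva : F.derivative.eval a = ((2 * a0 : ℤ) : ℤ_[p]) := by
    simp [hF, ha, Polynomial.derivative_sub, Polynomial.derivative_pow]
  have hnd : ¬ (p : ℤ) ∣ 2 * a0 := by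
    intro h
    rcases (Int.Prime.dvd_mul' hp.out h) with h2 | h2
    · have h3 : p ∣ 2 := by exact_mod_cast h2
      exact hodd ((Nat.prime_dvd_prime_iff_eq hp.out Nat.prime_two).mp h3)
    · apply hc0
      rw [← hcast]
      rwa [ZMod.intCast_zmod_eq_zero_iff_dvd] at *
  have hnorm2a : ‖F.derivative.eval a‖ = 1 := by
    rw [hderiva]
    refine le_antisymm (PadicInt.norm_le_one _) ?_
    by_contra hlt
    push_neg at hlt
    exact hnd ((PadicInt.norm_int_lt_one_iff_dvd _).mp hlt)
  have hdvd : (p : ℤ) ∣ a0 ^ 2 - n := by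
    rw [← ZMod.intCast_zmod_eq_zero_iff_dvd]
    push_cast
    rw [hcast, hc]
    ring
  have hnormF : ‖F.eval a‖ < 1 := by
    rw [hevala]
    exact (PadicInt.norm_int_lt_one_iff_dvd _).mpr hdvd
  have hnorm : ‖F.eval a‖ < ‖F.derivative.eval a‖ ^ 2 := by
    rw [hnorm2a]; simpa using hnormF
  obtain ⟨z, hz, -⟩ := hensels_lemma hnorm
  refine ⟨(z : ℚ_[p]), ?_⟩
  have : z ^ 2 = ((n : ℤ) : ℤ_[p]) := by
    have := hz
    simp [hF] at this
    linear_combination (this : z ^ 2 - (n : ℤ_[p]) = 0)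
  calc (z : ℚ_[p]) ^ 2 = ((z ^ 2 : ℤ_[p]) : ℚ_[p]) := by push_cast; ring
    _ = (n : ℚ_[p]) := by rw [this]; push_cast; ring

/-- Multiplicativity: if all prime divisors of `N` are squares mod `q`, so is `N`. -/
lemma isSquare_of_prime_divisors (q : ℕ) (N : ℕ)
    (h : ∀ r : ℕ, r.Prime → r ∣ N → IsSquare ((r : ZMod q))) :
    IsSquare ((N : ZMod q)) := by
  induction N using Nat.recOnMul with
  | zero => simpa using (⟨0, by ring⟩ : IsSquare (0 : ZMod q))
  | one => simpa using (⟨1, by ring⟩ : IsSquare (1 : ZMod q))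
  | prime r hr => exact h r hr dvd_rfl
  | mul a b ha hb =>
    push_cast
    exact (ha fun r hr hd => h r hr (hd.mul_right b)).mul
      (hb fun r hr hd => h r hr (hd.mul_left a))

/-- Let `p'` be a prime with `p' ≡ 1 (mod 4)` and `p` an odd prime
divisor of an integer `α` all of whose prime divisors are quadratic residues
mod `p'`.  Then the Hilbert symbol `(α, p')_p` equals `1`. -/
theorem stmt17 (p' : ℕ) (hp' : p'.Prime) (hp'4 : p' % 4 = 1)
    (p : ℕ) [hp : Fact p.Prime] (hodd : p ≠ 2) (α : ℤ) (hpα : (p : ℤ) ∣ α)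
    (hQR : ∀ r : ℕ, r.Prime → (r : ℤ) ∣ α → IsSquare ((r : ZMod p'))) :
    hilbertSymbol p (α : ℚ_[p]) (p' : ℚ_[p]) = 1 := by
  haveI : Fact p'.Prime := ⟨hp'⟩
  have hp'2 : p' ≠ 2 := by omega
  -- α ≠ 0
  have hα0 : α ≠ 0 := by
    rintro rfl
    obtain ⟨x, hx⟩ := FiniteField.exists_nonsquare
      (F := ZMod p') (by rw [ZMod.ringChar_zmod_n]; exact hp'2)
    apply hx
    have : IsSquare ((x.val : ZMod p')) :=
      isSquare_of_prime_divisors p' x.val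
        (fun r hr _ => hQR r hr (dvd_zero _))
    rwa [ZMod.natCast_val, ZMod.cast_id] at this
  have key : ∃ x y z : ℚ_[p], (x, y, z) ≠ (0, 0, 0) ∧
      (α : ℚ_[p]) * x ^ 2 + (p' : ℚ_[p]) * y ^ 2 = z ^ 2 := by
    rcases eq_or_ne p p' with rfl | hne
    · -- p = p' case
      have hsqm1 : IsSquare (-1 : ZMod p) :=
        ZMod.exists_sq_eq_neg_one_iff.mpr (by omega)
      -- write α = p ^ k * m with p ∤ m
      have hfin : FiniteMultiplicity (p : ℤ) α :=
        Int.finiteMultiplicity_iff.mpr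
          ⟨by simpa using hp.out.ne_one, hα0⟩
      obtain ⟨m, hm, hmd⟩ := hfin.exists_eq_pow_mul_and_not_dvd
      set k := multiplicity (p : ℤ) α with hk
      have hm0 : m ≠ 0 := fun h => hmd (h ▸ dvd_zero _)
      -- m is a square mod p
      have hsqm : IsSquare ((m : ZMod p)) := by
        have habs : IsSquare ((m.natAbs : ZMod p)) := by
          apply isSquare_of_prime_divisors
          intro r hr hd
          apply hQR r hr
          have : (r : ℤ) ∣ m :=
            (Int.natCast_dvd_natCast.mpr hd).trans (Int.natAbs_dvd.mpr dvd_rfl)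
          exact this.trans ⟨(p : ℤ) ^ k, by rw [hm]; ring⟩
        have hcast2 : (((m.natAbs : ℤ)) : ZMod p) = ((m.natAbs : ℕ) : ZMod p) :=
          Int.cast_natCast _
        rcases Int.natAbs_eq m with he | he
        · rw [he, hcast2]; exact habs
        · rw [he, Int.cast_neg, hcast2]
          simpa [neg_one_mul] using hsqm1.mul habs
      obtain ⟨s, hs⟩ := exists_padic_sqrt p hodd m hmd hsqm
      have hs0 : s ≠ 0 := by
        rintro rfl
        simp at hs
        exact hm0 (by exact_mod_cast hs.symm)
      rcases Nat.even_or_odd k with ⟨j, hj⟩ | ⟨j, hj⟩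
      · -- k even : α is a square
        refine ⟨1, 0, (p : ℚ_[p]) ^ j * s, ?_, ?_⟩
        · simp [Prod.ext_iff]
        · have : (α : ℚ_[p]) = ((p : ℚ_[p]) ^ j * s) ^ 2 := by
            rw [hm]
            push_cast
            rw [hj, mul_pow, ← pow_mul, hs]
            ring
          rw [this]; ring
      · -- k odd : α = p * square; use sqrt of -1
        have hndm1 : ¬ (p : ℤ) ∣ (-1 : ℤ) := by
          rw [Int.dvd_neg]
          intro h
          have h1 : (p : ℤ) = 1 := Int.eq_one_of_dvd_one (by positivity) h
          have : p = 1 := by exact_mod_cast h1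
          exact hp.out.one_lt.ne' this
        obtain ⟨i, hi⟩ := exists_padic_sqrt p hodd (-1) hndm1
          (by push_cast; exact hsqm1)
        refine ⟨1, (p : ℚ_[p]) ^ j * s * i, 0, ?_, ?_⟩
        · simp [Prod.ext_iff]
        · have : (α : ℚ_[p]) = (p : ℚ_[p]) * ((p : ℚ_[p]) ^ j) ^ 2 * s ^ 2 := by
            rw [hm]
            push_cast
            rw [hj, hs]
            ring
          rw [this, mul_pow, mul_pow, hi]
          push_cast
          ring
    · -- p ≠ p' : p' is a square mod p by quadratic reciprocity
      have h1 : IsSquare ((p : ZMod p')) := hQR p hp.out hpα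
      have h2 : IsSquare ((p' : ZMod p)) :=
        (ZMod.exists_sq_eq_prime_iff_of_mod_four_eq_one hp'4 hodd).mp h1
      have hnd : ¬ (p : ℤ) ∣ (p' : ℤ) := by
        rw [Int.natCast_dvd_natCast]
        intro hd
        exact hne ((Nat.prime_dvd_prime_iff_eq hp.out hp').mp hd)
      obtain ⟨s, hs⟩ := exists_padic_sqrt p hodd (p' : ℤ) hnd (by exact_mod_cast h2)
      refine ⟨0, 1, s, ?_, ?_⟩
      · simp [Prod.ext_iff]
      · rw [hs]; push_cast; ring
  unfold hilbertSymbol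
  rw [if_pos key]
end

section
/- Let p' be a prime with p' ≡ 1 (mod 4) and α an integer such that every prime divisor of α is a quadratic residue modulo p'. Then the quaternion algebra (α, p') over ℚ is split. -/
open Quaternion

set_option maxHeartbeats 1000000


lemma normMul (b x y : ℚ) (hx : ∃ u v : ℚ, u^2 - b*v^2 = x)
    (hy : ∃ u v : ℚ, u^2 - b*v^2 = y) : ∃ u v : ℚ, u^2 - b*v^2 = x*y := by
  obtain ⟨u1, v1, h1⟩ := hx
  obtain ⟨u2, v2, h2⟩ := hy
  exact ⟨u1*u2 + b*v1*v2, u1*v2 + v1*u2, by linear_combination (u2^2 - b*v2^2)*h1 + x*h2⟩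

lemma legendre_core (a b : ℕ) (ha : 0 < a) (hb : 0 < b) (hcop : Nat.Coprime a b)
    (hans : ¬ IsSquare a) (hbns : ¬ IsSquare b) (habns : ¬ IsSquare (a*b))
    (t s : ℤ) (ht : (a:ℤ) ∣ t^2 - b) (hs : (b:ℤ) ∣ s^2 - a) :
    ∃ u v : ℚ, u^2 - (b:ℚ)*v^2 = a := by
  haveI : NeZero a := ⟨ha.ne'⟩
  haveI : NeZero b := ⟨hb.ne'⟩
  set X := Nat.sqrt b with hX
  set Y := Nat.sqrt a with hY
  set Z := Nat.sqrt (a*b) with hZ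
  set S : Finset (ℤ × ℤ × ℤ) :=
    Finset.Icc 0 (X:ℤ) ×ˢ Finset.Icc 0 (Y:ℤ) ×ˢ Finset.Icc 0 (Z:ℤ) with hS
  have hcardS : S.card = (X+1) * ((Y+1) * (Z+1)) := by
    simp [hS, Int.card_Icc]
  have hcardT : (Finset.univ : Finset (ZMod a × ZMod b)).card = a * b := by
    simp [ZMod.card]
  have hlt : (Finset.univ : Finset (ZMod a × ZMod b)).card < S.card := by
    rw [hcardS, hcardT]
    have h1 : b < (X+1)*(X+1) := Nat.lt_succ_sqrt b
    have h2 : a < (Y+1)*(Y+1) := Nat.lt_succ_sqrt a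
    have h3 : a*b < (Z+1)*(Z+1) := Nat.lt_succ_sqrt (a*b)
    have key : (a*b)*(a*b) < ((X+1)*((Y+1)*(Z+1))) * ((X+1)*((Y+1)*(Z+1))) := by
      calc (a*b)*(a*b) = b*(a*(a*b)) := by ring
      _ < ((X+1)*(X+1))*(((Y+1)*(Y+1))*((Z+1)*(Z+1))) :=
          Nat.mul_lt_mul'' h1 (Nat.mul_lt_mul'' h2 h3)
      _ = ((X+1)*((Y+1)*(Z+1))) * ((X+1)*((Y+1)*(Z+1))) := by ring
    exact Nat.mul_self_lt_mul_self_iff.mp key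
  have hmaps : ∀ p ∈ S, (((p.2.2 - t*p.2.1 : ℤ) : ZMod a), ((p.2.2 - s*p.1 : ℤ) : ZMod b))
      ∈ (Finset.univ : Finset (ZMod a × ZMod b)) := fun _ _ => Finset.mem_univ _
  obtain ⟨p, hp, q, hq, hne, heq⟩ :=
    Finset.exists_ne_map_eq_of_card_lt_of_maps_to hlt hmaps
  obtain ⟨x1, y1, z1⟩ := p
  obtain ⟨x2, y2, z2⟩ := q
  simp only [Prod.mk.injEq] at heq
  obtain ⟨heqa, heqb⟩ := heq
  set x := x1 - x2 with hxdef
  set y := y1 - y2 with hydef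
  set z := z1 - z2 with hzdef
  have hPmem : ∀ w : ℤ × ℤ × ℤ, w ∈ S → w.1 ∈ Finset.Icc (0:ℤ) X ∧
      w.2.1 ∈ Finset.Icc (0:ℤ) Y ∧ w.2.2 ∈ Finset.Icc (0:ℤ) Z := by
    intro w hw
    simp only [hS, Finset.mem_product] at hw
    exact ⟨hw.1, hw.2.1, hw.2.2⟩
  obtain ⟨hx1, hy1, hz1⟩ := hPmem _ hp
  obtain ⟨hx2, hy2, hz2⟩ := hPmem _ hq
  simp only [Finset.mem_Icc] at hx1 hy1 hz1 hx2 hy2 hz2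
  have hxb : x^2 < b := by
    have h1 : x^2 ≤ (X:ℤ)^2 := by nlinarith [hx1.1, hx1.2, hx2.1, hx2.2]
    have h2 : (X:ℤ)^2 ≤ b := by exact_mod_cast Nat.sqrt_le' b
    have h3 : x^2 ≠ b := by
      intro hcon
      apply hbns
      refine ⟨x.natAbs, ?_⟩
      zify
      rw [abs_mul_abs_self]
      linear_combination -hcon
    omega
  have hya : y^2 < a := by
    have h1 : y^2 ≤ (Y:ℤ)^2 := by nlinarith [hy1.1, hy1.2, hy2.1, hy2.2]
    have h2 : (Y:ℤ)^2 ≤ a := by exact_mod_cast Nat.sqrt_le' a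
    have h3 : y^2 ≠ a := by
      intro hcon
      apply hans
      refine ⟨y.natAbs, ?_⟩
      zify
      rw [abs_mul_abs_self]
      linear_combination -hcon
    omega
  have hzab : z^2 < (a:ℤ)*b := by
    have h1 : z^2 ≤ (Z:ℤ)^2 := by nlinarith [hz1.1, hz1.2, hz2.1, hz2.2]
    have h2 : (Z:ℤ)^2 ≤ ((a*b:ℕ):ℤ) := by exact_mod_cast Nat.sqrt_le' (a*b)
    have h3 : z^2 ≠ ((a*b:ℕ):ℤ) := by
      intro hcon
      apply habns
      refine ⟨z.natAbs, ?_⟩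
      zify
      rw [abs_mul_abs_self]
      push_cast
      push_cast at hcon
      linear_combination -hcon
    push_cast at h2 h3 ⊢
    omega
  have hda : (a:ℤ) ∣ z - t*y := by
    have h := Int.ModEq.dvd ((ZMod.intCast_eq_intCast_iff _ _ _).mp heqa)
    rw [show (z2 - t*y2) - (z1 - t*y1) = -(z - t*y) by simp [hydef, hzdef]; ring] at h
    exact dvd_neg.mp h
  have hdb : (b:ℤ) ∣ z - s*x := by
    have h := Int.ModEq.dvd ((ZMod.intCast_eq_intCast_iff _ _ _).mp heqb)
    rw [show (z2 - s*x2) - (z1 - s*x1) = -(z - s*x) by simp [hxdef, hzdef]; ring] at h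
    exact dvd_neg.mp h
  set f : ℤ := z^2 - a*x^2 - b*y^2 with hf
  have hfa : (a:ℤ) ∣ f := by
    have : f = (z - t*y)*(z + t*y) + (t^2 - b)*y^2 + a*(-x^2) := by rw [hf]; ring
    rw [this]
    exact dvd_add (dvd_add (Dvd.dvd.mul_right hda _) (Dvd.dvd.mul_right ht _)) ⟨-x^2, rfl⟩
  have hfb : (b:ℤ) ∣ f := by
    have : f = (z - s*x)*(z + s*x) + (s^2 - a)*x^2 + b*(-y^2) := by rw [hf]; ring
    rw [this]
    exact dvd_add (dvd_add (Dvd.dvd.mul_right hdb _) (Dvd.dvd.mul_right hs _)) ⟨-y^2, rfl⟩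
  have hfab : ((a:ℤ)*b) ∣ f :=
    (Nat.isCoprime_iff_coprime.mpr hcop).mul_dvd hfa hfb
  have hab0 : (0:ℤ) < (a:ℤ)*b := by positivity
  have hcases : f = 0 ∨ f = -(a*b) := by
    obtain ⟨k, hk⟩ := hfab
    have hfup : f < a*b := by
      have : z^2 < (a:ℤ)*b := hzab
      nlinarith [sq_nonneg x, sq_nonneg y, (show (0:ℤ) ≤ a by positivity), (show (0:ℤ) ≤ b by positivity)]
    have hflow : -(2*((a:ℤ)*b)) < f := by
      have hax : (a:ℤ)*x^2 < a*b := by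
        have := hxb
        nlinarith [(show (0:ℤ) < a by exact_mod_cast ha)]
      have hby : (b:ℤ)*y^2 < b*a := by
        have := hya
        nlinarith [(show (0:ℤ) < b by exact_mod_cast hb)]
      nlinarith [sq_nonneg z]
    rw [hk] at hfup hflow ⊢
    have hk1 : k < 1 := by nlinarith
    have hk2 : -2 < k := by nlinarith
    interval_cases k
    · right; ring
    · left; ring
  have hnz : ¬ (x = 0 ∧ y = 0 ∧ z = 0) := by
    rintro ⟨h1, h2, h3⟩
    apply hne
    have : x1 = x2 := by omega
    have : y1 = y2 := by omega
    have : z1 = z2 := by omega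
    simp_all
  have hbnsq : ∀ w r : ℤ, w ≠ 0 → r^2 = b * w^2 → False := by
    intro w r hw hr
    apply hbns
    have hnat : r.natAbs^2 = b * w.natAbs^2 := by
      zify
      rw [sq_abs, sq_abs]
      linear_combination hr
    have hdvd : w.natAbs ∣ r.natAbs := by
      exact (Nat.pow_dvd_pow_iff (n := 2) two_ne_zero).mp ⟨b, by rw [hnat]; ring⟩
    obtain ⟨c, hc⟩ := hdvd
    refine ⟨c, ?_⟩
    have hw' : 0 < w.natAbs := Int.natAbs_pos.mpr hw
    have : w.natAbs^2 * b = w.natAbs^2 * (c*c) := by rw [hc] at hnat; ring_nf at hnat ⊢; linarith [hnat]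
    exact Nat.eq_of_mul_eq_mul_left (by positivity) this
  rcases hcases with h0 | hm
  -- case f = 0 : z^2 = a x^2 + b y^2
  · have hx0 : x ≠ 0 := by
      intro hx'
      rcases eq_or_ne y 0 with hy' | hy'
      · have hz' : z = 0 := by
          have : z^2 = 0 := by rw [hf] at h0; rw [hx', hy'] at h0; linarith [h0]
          exact pow_eq_zero_iff two_ne_zero |>.mp this
        exact hnz ⟨hx', hy', hz'⟩
      · refine hbnsq y z hy' ?_
        rw [hf] at h0
        rw [hx'] at h0
        linarith [h0]
    refine ⟨(z:ℚ)/(x:ℚ), (y:ℚ)/(x:ℚ), ?_⟩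
    have hxq : (x:ℚ) ≠ 0 := Int.cast_ne_zero.mpr hx0
    have h0' : (z:ℚ)^2 - (a:ℚ)*(x:ℚ)^2 - (b:ℚ)*(y:ℚ)^2 = 0 := by
      exact_mod_cast congrArg (fun w : ℤ => (w:ℚ)) h0
    field_simp
    linear_combination h0'
  -- case f = -ab : z^2 - b y^2 = a (x^2 - b)
  · have hkey : (z:ℚ)^2 - (b:ℚ)*(y:ℚ)^2 = (a:ℚ)*((x:ℚ)^2 - b) := by
      have : z^2 - (b:ℤ)*y^2 = a*(x^2 - b) := by rw [hf] at hm; linarith [hm]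
      exact_mod_cast congrArg (fun w : ℤ => (w:ℚ)) this
    have hd : (x:ℚ)^2 - (b:ℚ) ≠ 0 := by
      intro hcon
      apply hbns
      refine ⟨x.natAbs, ?_⟩
      have : (x:ℚ)^2 = b := by linarith
      have hzint : x^2 = (b:ℤ) := by exact_mod_cast this
      zify
      rw [abs_mul_abs_self]
      linear_combination -hzint
    refine ⟨((z:ℚ)*x + b*y)/((x:ℚ)^2 - b), ((z:ℚ) + y*x)/((x:ℚ)^2 - b), ?_⟩
    field_simp
    linear_combination ((x:ℚ)^2 - b)*hkey

lemma prime_not_isSquare {p : ℕ} (hp : p.Prime) : ¬ IsSquare p := by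
  rintro ⟨r, hr⟩
  rcases (Nat.Prime.eq_one_or_self_of_dvd hp r ⟨r, hr⟩) with h | h
  · rw [h] at hr; simp at hr; exact hp.one_lt.ne' hr
  · rw [h] at hr; nlinarith [hp.one_lt]

lemma neg_one_norm (p' : ℕ) (hp' : p'.Prime) (hp'4 : p' % 4 = 1) : ∃ u v : ℚ, u^2 - (p':ℚ)*v^2 = -1 := by
  haveI : Fact p'.Prime := ⟨hp'⟩
  obtain ⟨m, n, hmn⟩ := Nat.Prime.sq_add_sq (p := p') (by omega)
  have hn : n ≠ 0 := by
    intro h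
    subst h
    exact prime_not_isSquare hp' ⟨m, by rw [← hmn]; ring⟩
  have hnq : (n:ℚ) ≠ 0 := Nat.cast_ne_zero.mpr hn
  refine ⟨(m:ℚ)/(n:ℚ), 1/(n:ℚ), ?_⟩
  have : (m:ℚ)^2 + (n:ℚ)^2 = p' := by exact_mod_cast congrArg (fun w : ℕ => (w:ℚ)) hmn
  field_simp
  linear_combination this


lemma prime_norm (p' q : ℕ) (hp' : p'.Prime) (hp'4 : p' % 4 = 1) (hq : q.Prime)
    (hsq : IsSquare ((q : ZMod p'))) : ∃ u v : ℚ, u^2 - (p':ℚ)*v^2 = q := by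
  haveI : Fact p'.Prime := ⟨hp'⟩
  by_cases hqp : q = p'
  · subst hqp
    have h2 : ∃ u v : ℚ, u^2 - (q:ℚ)*v^2 = -(q:ℚ) := ⟨0, 1, by ring⟩
    have := normMul (q:ℚ) (-1) (-(q:ℚ)) (neg_one_norm q hp' hp'4) h2
    rwa [neg_mul_neg, one_mul] at this
  · haveI : Fact q.Prime := ⟨hq⟩
    obtain ⟨c, hc⟩ := hsq
    have hs : (p':ℤ) ∣ (c.val:ℤ)^2 - q := by
      apply (ZMod.intCast_zmod_eq_zero_iff_dvd _ _).mp
      push_cast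
      rw [ZMod.natCast_val, ZMod.cast_id, hc]
      ring
    have ht : ∃ t : ℤ, (q:ℤ) ∣ t^2 - p' := by
      by_cases hq2 : q = 2
      · subst hq2
        refine ⟨1, ?_⟩
        have h1 : p' % 4 = 1 := hp'4
        omega
      · have hodd : IsSquare ((p' : ZMod q)) :=
          (ZMod.exists_sq_eq_prime_iff_of_mod_four_eq_one hp'4 hq2).mp ⟨c, hc⟩
        obtain ⟨d, hd⟩ := hodd
        refine ⟨(d.val:ℤ), ?_⟩
        apply (ZMod.intCast_zmod_eq_zero_iff_dvd _ _).mp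
        push_cast
        rw [ZMod.natCast_val, ZMod.cast_id, hd]
        ring
    obtain ⟨t, ht⟩ := ht
    have hqpns : ¬ IsSquare (q * p') := by
      rintro ⟨r, hr⟩
      have hdvd : q ∣ r := hq.dvd_of_dvd_pow (n := 2) ⟨p', by rw [sq]; linarith [hr]⟩
      obtain ⟨r', hr'⟩ := hdvd
      have : p' = q * r'^2 := by
        have : q * p' = q * (q * r'^2) := by rw [hr, hr']; ring
        exact Nat.eq_of_mul_eq_mul_left hq.pos this
      have : q ∣ p' := ⟨r'^2, this⟩
      exact hqp ((Nat.prime_dvd_prime_iff_eq hq hp').mp this)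
    exact legendre_core q p' hq.pos hp'.pos ((Nat.coprime_primes hq hp').mpr hqp)
      (prime_not_isSquare hq) (prime_not_isSquare hp') hqpns t (c.val:ℤ) ht hs

lemma int_norm (p' : ℕ) (hp' : p'.Prime) (hp'4 : p' % 4 = 1) :
    ∀ n : ℕ, ∀ β : ℤ, β.natAbs = n → β ≠ 0 →
    (∀ r : ℕ, r.Prime → (r:ℤ) ∣ β → IsSquare ((r : ZMod p'))) →
    ∃ u v : ℚ, u^2 - (p':ℚ)*v^2 = β := by
  intro n
  induction n using Nat.strong_induction_on with
  | _ n ih =>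
    intro β hβn hβ0 hdiv
    rcases eq_or_ne n 1 with h1 | h1
    · rcases Int.natAbs_eq_iff.mp (hβn.trans h1) with h | h
      · rw [h]; exact ⟨1, 0, by push_cast; ring⟩
      · rw [h]; push_cast; exact neg_one_norm p' hp' hp'4
    · have hn0 : n ≠ 0 := by
        intro h; rw [h] at hβn; exact hβ0 (Int.natAbs_eq_zero.mp hβn)
      have hn2 : 2 ≤ n := by omega
      set q := n.minFac with hq
      have hqprime : q.Prime := Nat.minFac_prime h1
      have hqdvdn : q ∣ n := Nat.minFac_dvd n
      have hqdvdβ : (q:ℤ) ∣ β := by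
        rw [← hβn] at hqdvdn
        exact (Int.natCast_dvd_natCast.mpr hqdvdn).trans (Int.natAbs_dvd.mpr dvd_rfl)
      obtain ⟨γ, hγ⟩ := hqdvdβ
      have hγ0 : γ ≠ 0 := by rintro rfl; simp at hγ; exact hβ0 hγ
      have hγabs : γ.natAbs < n := by
        have h1' : β.natAbs = q * γ.natAbs := by
          rw [hγ, Int.natAbs_mul]; simp
        have hq2 : 2 ≤ q := hqprime.two_le
        have : γ.natAbs < q * γ.natAbs := by
          have : 0 < γ.natAbs := Int.natAbs_pos.mpr hγ0
          nlinarith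
        omega
      have hγnorm := ih γ.natAbs hγabs γ rfl hγ0 (fun r hr hrd => hdiv r hr (hrd.trans ⟨q, by rw [hγ]; ring⟩))
      have hqnorm := prime_norm p' q hp' hp'4 hqprime (hdiv q hqprime ⟨γ, hγ⟩)
      have := normMul (p':ℚ) q γ hqnorm hγnorm
      rw [hγ]
      push_cast
      exact this


lemma buildIso (a b u v : ℚ) (ha : a ≠ 0) (hb : b ≠ 0) (h : u^2 - b*v^2 = a) :
    Nonempty (ℍ[ℚ, a, b] ≃ₐ[ℚ] Matrix (Fin 2) (Fin 2) ℚ) := by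
  let B : QuaternionAlgebra.Basis (Matrix (Fin 2) (Fin 2) ℚ) a 0 b :=
  { i := !![u, v; -b*v, -u]
    j := !![0, 1; b, 0]
    k := !![b*v, u; -b*u, -b*v]
    i_mul_i := by
      ext i j
      fin_cases i <;> fin_cases j <;>
        simp [Matrix.mul_apply, Fin.sum_univ_two, Matrix.smul_apply, Matrix.one_apply] <;>
        linarith [h]
    j_mul_j := by
      ext i j
      fin_cases i <;> fin_cases j <;>
        simp [Matrix.mul_apply, Fin.sum_univ_two, Matrix.smul_apply, Matrix.one_apply]
    i_mul_j := by
      ext i j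
      fin_cases i <;> fin_cases j <;>
        simp [Matrix.mul_apply, Fin.sum_univ_two] <;> ring
    j_mul_i := by
      ext i j
      fin_cases i <;> fin_cases j <;>
        simp [Matrix.mul_apply, Fin.sum_univ_two] <;> ring }
  have hlift : ∀ q : ℍ[ℚ, a, b], B.liftHom q =
      !![q.re + q.imI*u + q.imK*(b*v), q.imI*v + q.imJ + q.imK*u;
         q.imI*(-b*v) + q.imJ*b + q.imK*(-b*u), q.re - q.imI*u - q.imK*(b*v)] := by
    intro q
    show B.lift q = _
    unfold QuaternionAlgebra.Basis.lift
    ext i j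
    fin_cases i <;> fin_cases j <;>
      simp [B, Matrix.smul_apply, Matrix.one_apply, Algebra.algebraMap_eq_smul_one] <;> ring
  have hinj : Function.Injective B.liftHom := by
    rw [injective_iff_map_eq_zero]
    intro q hq
    rw [hlift q] at hq
    have e00 := congrArg (fun M => M 0 0) hq
    have e01 := congrArg (fun M => M 0 1) hq
    have e10 := congrArg (fun M => M 1 0) hq
    have e11 := congrArg (fun M => M 1 1) hq
    simp at e00 e01 e10 e11
    have hre : q.re = 0 := by linarith
    have h1 : q.imI * u + q.imK * (b*v) = 0 := by linarith
    have h10 : q.imI*(-(b*v)) + q.imJ*b + q.imK*(-(b*u)) = 0 := by linear_combination e10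
    have h2 : q.imI * v + q.imK * u = 0 := by
      have hb2 : b * (q.imI * v + q.imK * u) = 0 := by linear_combination (b/2)*e01 - (1/2)*h10
      exact (mul_eq_zero.mp hb2).resolve_left hb
    have hJ : q.imJ = 0 := by
      linarith [e01, h2]
    have hI : q.imI = 0 := by
      have : q.imI * a = 0 := by linear_combination u*h1 - (b*v)*h2 - q.imI*h
      exact (mul_eq_zero.mp this).resolve_right ha
    have hK : q.imK = 0 := by
      have : q.imK * a = 0 := by linear_combination u*h2 - v*h1 - q.imK*h
      exact (mul_eq_zero.mp this).resolve_right ha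
    ext <;> simp [hre, hI, hJ, hK]
  have hfin : Module.Finite ℚ ℍ[ℚ,a,b] := Module.Finite.of_basis (QuaternionAlgebra.basisOneIJK a 0 b)
  have h4 : Module.finrank ℚ ℍ[ℚ,a,b] = Module.finrank ℚ (Matrix (Fin 2) (Fin 2) ℚ) := by
    rw [QuaternionAlgebra.finrank_eq_four, Module.finrank_matrix]
    simp
  have hsurj : Function.Surjective B.liftHom := by
    have := (LinearMap.injective_iff_surjective_of_finrank_eq_finrank
      (f := B.liftHom.toLinearMap) h4).mp (by exact hinj)
    exact this
  exact ⟨AlgEquiv.ofBijective B.liftHom ⟨hinj, hsurj⟩⟩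


lemma nat_sq (p' : ℕ) (hsq : ∀ r : ℕ, r.Prime → IsSquare ((r : ZMod p'))) :
    ∀ n : ℕ, 0 < n → IsSquare ((n : ZMod p')) := by
  intro n
  induction n using Nat.strong_induction_on with
  | _ n ih =>
    intro hn
    rcases eq_or_ne n 1 with h1 | h1
    · rw [h1]; exact ⟨1, by simp⟩
    · set q := n.minFac with hq
      have hqprime : q.Prime := Nat.minFac_prime h1
      obtain ⟨m, hm⟩ := Nat.minFac_dvd n
      have hm0 : 0 < m := by
        rcases Nat.eq_zero_or_pos m with h | h
        · rw [h, Nat.mul_zero] at hm; omega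
        · exact h
      have hmlt : m < n := by
        have := hqprime.two_le
        nlinarith
      have := ih m hmlt hm0
      have : IsSquare ((q : ZMod p') * (m : ZMod p')) := IsSquare.mul (hsq q hqprime) this
      rw [← Nat.cast_mul, ← hm] at this
      exact this

/-- If `p'` is a prime with `p' ≡ 1 (mod 4)` and `α` is an integer
all of whose prime divisors are quadratic residues mod `p'`, then the
quaternion algebra `(α, p')` over `ℚ` is split. -/
theorem stmt18 (p' : ℕ) (hp' : p'.Prime) (hp'4 : p' % 4 = 1) (α : ℤ)
    (hQR : ∀ r : ℕ, r.Prime → (r : ℤ) ∣ α → IsSquare ((r : ZMod p'))) :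
    Nonempty (ℍ[ℚ, (α : ℚ), (p' : ℚ)] ≃ₐ[ℚ] Matrix (Fin 2) (Fin 2) ℚ) := by
  haveI : Fact p'.Prime := ⟨hp'⟩
  have hα0 : α ≠ 0 := by
    rintro rfl
    have hall : ∀ r : ℕ, r.Prime → IsSquare ((r : ZMod p')) :=
      fun r hr => hQR r hr (dvd_zero _)
    obtain ⟨c, hc⟩ := FiniteField.exists_nonsquare (F := ZMod p')
      (by rw [ZMod.ringChar_zmod_n]; omega)
    apply hc
    rcases eq_or_ne c 0 with h | h
    · rw [h]; exact ⟨0, by simp⟩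
    · have hval : 0 < c.val := by
        rcases Nat.eq_zero_or_pos c.val with h0 | h0
        · exact absurd ((ZMod.val_eq_zero c).mp h0) h
        · exact h0
      have := nat_sq p' hall c.val hval
      rwa [ZMod.natCast_val, ZMod.cast_id] at this
  obtain ⟨u, v, huv⟩ := int_norm p' hp' hp'4 α.natAbs α rfl hα0 hQR
  refine buildIso (α:ℚ) (p':ℚ) u v ?_ ?_ huv
  · exact_mod_cast hα0
  · exact_mod_cast hp'.pos.ne'
end
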